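/- arXiv:2002.02122 — 3 statements merged into one kernel-verified Lean document; each statement's English description precedes it below -/
import Mathlib

section
/- Let k be an algebraically closed field of characteristic 2, let r, s ∈ k with r ≠ 0 and s^2 + s = r^5, and set b = (r^5 + 1)/r. Then the map α: (x,y) ↦ (x + r^2, y + r x^2 + r^3 x + s) is an involution of the curve C_b: y^2 + y = x^5 + b x^3, the functions u = x^2 + r^2 x and v = y + (x/r^2)(r x^2 + r^3 x + s) are invariant under α, and they satisfy v^2 + v = u^3/r^2 + (s/r^4)·u. -/
/-- Let `k` be algebraically closed of characteristic 2, `r, s ∈ k` with `r ≠ 0` and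
`s² + s = r⁵`, and `b = (r⁵+1)/r`.  The map `α : (x,y) ↦ (x + r², y + rx² + r³x + s)`
is an involution of the curve `C_b : y² + y = x⁵ + bx³`, the functions
`u = x² + r²x` and `v = y + (x/r²)(rx² + r³x + s)` are invariant under `α`, and
`v² + v = u³/r² + (s/r⁴)u`. -/
theorem stmt_5 (k : Type*) [Field k] [IsAlgClosed k] [CharP k 2]
    (r s : k) (hr : r ≠ 0) (hs : s ^ 2 + s = r ^ 5) (b : k) (hb : b = (r ^ 5 + 1) / r) :
    ∀ x y : k, y ^ 2 + y = x ^ 5 + b * x ^ 3 →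
      -- α maps points of C_b to points of C_b:
      ((y + r * x ^ 2 + r ^ 3 * x + s) ^ 2 + (y + r * x ^ 2 + r ^ 3 * x + s)
          = (x + r ^ 2) ^ 5 + b * (x + r ^ 2) ^ 3) ∧
      -- α is an involution:
      ((x + r ^ 2) + r ^ 2 = x ∧
        (y + r * x ^ 2 + r ^ 3 * x + s)
            + r * (x + r ^ 2) ^ 2 + r ^ 3 * (x + r ^ 2) + s = y) ∧
      -- u is invariant under α:
      ((x + r ^ 2) ^ 2 + r ^ 2 * (x + r ^ 2) = x ^ 2 + r ^ 2 * x) ∧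
      -- v is invariant under α:
      ((y + r * x ^ 2 + r ^ 3 * x + s)
          + ((x + r ^ 2) / r ^ 2) * (r * (x + r ^ 2) ^ 2 + r ^ 3 * (x + r ^ 2) + s)
        = y + (x / r ^ 2) * (r * x ^ 2 + r ^ 3 * x + s)) ∧
      -- v² + v = u³/r² + (s/r⁴)u:
      ((y + (x / r ^ 2) * (r * x ^ 2 + r ^ 3 * x + s)) ^ 2
          + (y + (x / r ^ 2) * (r * x ^ 2 + r ^ 3 * x + s))
        = (x ^ 2 + r ^ 2 * x) ^ 3 / r ^ 2 + (s / r ^ 4) * (x ^ 2 + r ^ 2 * x)) := by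
  intro x y hC
  have h2 : (2 : k) = 0 := by
    exact_mod_cast CharP.cast_eq_zero k 2
  subst hb
  field_simp at hC
  refine ⟨?_, ⟨?_, ?_⟩, ?_, ?_, ?_⟩
  · field_simp
    linear_combination hC + r * hs +
      (- r^11 + y*r*s - x*r^4 + x*r^4*s - 4*x*r^9 + x*y*r^4 - x^2*r^2 + x^2*r^2*s
        - 6*x^2*r^7 + x^2*y*r^2 - 4*x^3*r^5 - 2*x^4*r^3) * h2
  · linear_combination r^2 * h2
  · linear_combination (r*x^2 + 2*r^3*x + s + r^5) * h2
  · linear_combination (r^2*x + r^4) * h2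
  · field_simp
    linear_combination (r^2*s + r^7 + 3*x*r^5 + 2*x^2*r^3) * h2
  · field_simp
    linear_combination r^3 * hC + x^2 * hs +
      (x*y*r^2*s - x^2*s + x^2*r^5 + x^2*y*r^5 + x^3*r^3 + x^3*r^3*s + x^3*y*r^3
        + x^4*r*s - x^4*r^6) * h2
end

section
/- Let k be a field of characteristic 2. For a polynomial S = s_{10} t^{10} + s_9 t^9 + ⋯ + s_1 t + s_0 in k[t] of degree at most 10, there exists T ∈ k[t] with S = T^2 + T if and only if k contains a root of X^2 + X + s_0 and the following hold: s_9 = 0, s_7 = 0, s_{10} + s_5^2 = 0, s_6 + s_3^2 = 0, and s_8 + s_4^2 + s_2^4 + s_1^8 = 0. -/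
open Polynomial Finset

private lemma sum_coeff_eq {k : Type*} [Field k] (s : Fin 11 → k) (n : Fin 11) :
    (∑ i : Fin 11, C (s i) * X ^ (i : ℕ)).coeff (n : ℕ) = s n := by
  rw [finset_sum_coeff]
  simp only [coeff_C_mul, coeff_X_pow]
  have h : ∀ i : Fin 11, s i * (if (n : ℕ) = (i : ℕ) then (1 : k) else 0)
      = if i = n then s i else 0 := by
    intro i
    by_cases h : i = n
    · simp [h]
    · rw [if_neg (by simpa [eq_comm, Fin.val_eq_val] using h), if_neg h, mul_zero]
  simp [h]

private lemma sum_expand {k : Type*} [Field k] (s : Fin 11 → k) :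
    (∑ i : Fin 11, C (s i) * X ^ (i : ℕ)) =
      C (s 0) + C (s 1)*X + C (s 2)*X^2 + C (s 3)*X^3 + C (s 4)*X^4 + C (s 5)*X^5
      + C (s 6)*X^6 + C (s 7)*X^7 + C (s 8)*X^8 + C (s 9)*X^9 + C (s 10)*X^10 := by
  simp [Fin.sum_univ_succ]
  ring_nf

/-- Let `k` be a field of characteristic 2 and
`S = s₁₀t¹⁰ + ⋯ + s₁t + s₀ ∈ k[t]`.  There exists `T ∈ k[t]` with `S = T² + T`
if and only if `k` contains a root of `X² + X + s₀` and
`s₉ = 0`, `s₇ = 0`, `s₁₀ + s₅² = 0`, `s₆ + s₃² = 0`, `s₈ + s₄² + s₂⁴ + s₁⁸ = 0`. -/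
theorem stmt_17 (k : Type*) [Field k] [CharP k 2] (s : Fin 11 → k) :
    (∃ T : k[X], (∑ i : Fin 11, C (s i) * X ^ (i : ℕ)) = T ^ 2 + T) ↔
      ((∃ z : k, z ^ 2 + z + s 0 = 0) ∧
        s 9 = 0 ∧ s 7 = 0 ∧ s 10 + (s 5) ^ 2 = 0 ∧ s 6 + (s 3) ^ 2 = 0 ∧
        s 8 + (s 4) ^ 2 + (s 2) ^ 4 + (s 1) ^ 8 = 0) := by
  have h2k : (2 : k) = 0 := by exact_mod_cast CharP.cast_eq_zero k 2
  constructor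
  · rintro ⟨T, hT⟩
    have hsq : ∀ n, (T ^ 2).coeff n = (if 2 ∣ n then T.coeff (n / 2) else 0) ^ 2 := by
      intro n
      rw [← map_frobenius_expand 2 T, coeff_map, coeff_expand (by norm_num)]
      simp [frobenius_def]
    have hco : ∀ n, (∑ i : Fin 11, C (s i) * X ^ (i : ℕ)).coeff n
        = (if 2 ∣ n then T.coeff (n / 2) else 0) ^ 2 + T.coeff n := by
      intro n; rw [hT, coeff_add, hsq]
    have hdeg : ∀ n, 6 ≤ n → T.coeff n = 0 := by
      intro n hn
      have hT5 : T.natDegree ≤ 5 := by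
        by_contra hd
        push_neg at hd
        have hne : T ≠ 0 := fun h => by simp [h] at hd
        have e := hco (2 * T.natDegree)
        have hl : (∑ i : Fin 11, C (s i) * X ^ (i : ℕ)).coeff (2 * T.natDegree) = 0 := by
          rw [finset_sum_coeff]
          apply Finset.sum_eq_zero
          intro i _
          have hi := i.is_lt
          rw [coeff_C_mul, coeff_X_pow, if_neg (by omega), mul_zero]
        rw [hl, if_pos ⟨T.natDegree, rfl⟩, Nat.mul_div_cancel_left _ (by norm_num),
          coeff_eq_zero_of_natDegree_lt (show T.natDegree < 2 * T.natDegree by omega),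
          add_zero] at e
        have hl0 : T.leadingCoeff = 0 :=
          pow_eq_zero_iff (n := 2) (by norm_num) |>.mp e.symm
        exact hne (leadingCoeff_eq_zero.mp hl0)
      exact coeff_eq_zero_of_natDegree_lt (by omega)
    have E : ∀ n : Fin 11,
        s n = (if 2 ∣ (n : ℕ) then T.coeff ((n : ℕ) / 2) else 0) ^ 2 + T.coeff (n : ℕ) :=
      fun n => by rw [← sum_coeff_eq s n, hco]
    have e0 := E 0
    have e1 := E 1
    have e2 := E 2
    have e3 := E 3
    have e4 := E 4
    have e5 := E 5
    have e6 := E 6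
    have e7 := E 7
    have e8 := E 8
    have e9 := E 9
    have e10 := E 10
    simp only [show ((3:Fin 11):ℕ) = 3 from rfl, show ((4:Fin 11):ℕ) = 4 from rfl,
      show ((5:Fin 11):ℕ) = 5 from rfl, show ((6:Fin 11):ℕ) = 6 from rfl,
      show ((7:Fin 11):ℕ) = 7 from rfl, show ((8:Fin 11):ℕ) = 8 from rfl,
      show ((9:Fin 11):ℕ) = 9 from rfl, show ((10:Fin 11):ℕ) = 10 from rfl]
      at e3 e4 e5 e6 e7 e8 e9 e10
    norm_num at e0 e1 e2 e3 e4 e5 e6 e7 e8 e9 e10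
    rw [hdeg 6 (by norm_num), add_zero] at e6
    rw [hdeg 7 (by norm_num)] at e7
    rw [hdeg 8 (by norm_num), add_zero] at e8
    rw [hdeg 9 (by norm_num)] at e9
    rw [hdeg 10 (by norm_num), add_zero] at e10
    refine ⟨⟨T.coeff 0, ?_⟩, e9, e7, ?_, ?_, ?_⟩
    · rw [e0]; linear_combination (T.coeff 0 ^ 2 + T.coeff 0) * h2k
    · rw [e10, e5]; linear_combination T.coeff 5 ^ 2 * h2k
    · rw [e6, e3]; linear_combination T.coeff 3 ^ 2 * h2k
    · rw [e8, e4, e2, e1]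
      linear_combination (T.coeff 4 ^ 2 + T.coeff 2 ^ 4 + T.coeff 2 ^ 2 * T.coeff 4
        + T.coeff 1 ^ 8 + 2 * T.coeff 1 ^ 6 * T.coeff 2 + 3 * T.coeff 1 ^ 4 * T.coeff 2 ^ 2
        + 2 * T.coeff 1 ^ 2 * T.coeff 2 ^ 3) * h2k
  · rintro ⟨⟨z, hz⟩, h9, h7, h10, h6, h8⟩
    have h2' : (2 : k[X]) = 0 := by
      rw [← map_ofNat (C : k →+* k[X]) 2, h2k, map_zero]
    have hs0 : s 0 = z ^ 2 + z := by linear_combination -hz + s 0 * h2k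
    have hs6 : s 6 = s 3 ^ 2 := by linear_combination h6 - s 3 ^ 2 * h2k
    have hs10 : s 10 = s 5 ^ 2 := by linear_combination h10 - s 5 ^ 2 * h2k
    have hs8 : s 8 = s 4 ^ 2 + s 2 ^ 4 + s 1 ^ 8 := by
      linear_combination h8 - (s 4 ^ 2 + s 2 ^ 4 + s 1 ^ 8) * h2k
    refine ⟨C z + C (s 1) * X + C (s 2 + s 1 ^ 2) * X ^ 2 + C (s 3) * X ^ 3
      + C (s 4 + s 2 ^ 2 + s 1 ^ 4) * X ^ 4 + C (s 5) * X ^ 5, ?_⟩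
    rw [sum_expand]
    conv_rhs => rw [← map_frobenius_expand 2]
    simp only [map_add, map_mul, map_pow, expand_C, expand_X, Polynomial.map_add,
      Polynomial.map_mul, Polynomial.map_pow, Polynomial.map_C, Polynomial.map_X,
      frobenius_def]
    rw [hs0, hs6, hs8, hs10, h7, h9]
    simp only [map_add, map_pow, map_zero]
    linear_combination (-(C (s 1) ^ 2 * X ^ 2)
      - (C (s 2) ^ 2 + C (s 2) * C (s 1) ^ 2 + C (s 1) ^ 4) * X ^ 4
      - (C (s 4) * C (s 2) ^ 2 + C (s 4) * C (s 1) ^ 4 + C (s 2) ^ 2 * C (s 1) ^ 4) * X ^ 8)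
      * h2'
      + (C (s 1) ^ 2 * C (s 2) * X ^ 4 + C (s 1) ^ 4 * C (s 2) ^ 2 * X ^ 8
        + C (s 1) ^ 4 * C (s 4) * X ^ 8 + C (s 2) ^ 2 * C (s 4) * X ^ 8) * h2'
end

section
/- Let k be an algebraically closed field of characteristic 2, A ∈ k nonzero, and f = A^{22} a^{60} + A^{16} a^{45} + A^{14} a^{40} + A^8 a^{25} + A^6 a^{20} + a^5 + A^2 ∈ k[a]. Then f is separable (its discriminant with respect to a is A^{1356} ≠ 0), and hence f has exactly 60 distinct roots in k, all of which are nonzero. -/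
open Polynomial

namespace Stmt19

/-- The Sylvester matrix of `f` and `g`, regarded as polynomials of degrees `m`
and `n` respectively: an `(m+n) × (m+n)` matrix whose first `n` rows contain the
shifted coefficients of `f` and whose last `m` rows contain those of `g`. -/
noncomputable def sylvester {R : Type*} [CommRing R] (m n : ℕ) (f g : R[X]) :
    Matrix (Fin (m + n)) (Fin (m + n)) R := fun i j =>
  if (i : ℕ) < n then
    (if (i : ℕ) ≤ (j : ℕ) then f.coeff ((j : ℕ) - (i : ℕ)) else 0)
  else
    (if (i : ℕ) - n ≤ (j : ℕ) then g.coeff ((j : ℕ) - ((i : ℕ) - n)) else 0)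

/-- The resultant of `f` and `g` (of formal degrees `m`, `n`): the determinant of
their Sylvester matrix. -/
noncomputable def resultant {R : Type*} [CommRing R] (m n : ℕ) (f g : R[X]) : R :=
  (sylvester m n f g).det

/-- The row-reordering permutation used in the determinant computation. -/
def rho : Equiv.Perm (Fin (60 + 59)) where
  toFun p := ⟨if (p : ℕ) < 44 then (p : ℕ) else if (p : ℕ) < 104 then (p : ℕ) + 15
      else (p : ℕ) - 60, by have := p.isLt; split_ifs <;> omega⟩
  invFun r := ⟨if (r : ℕ) < 44 then (r : ℕ) else if (r : ℕ) < 59 then (r : ℕ) + 60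
      else (r : ℕ) - 15, by have := r.isLt; split_ifs <;> omega⟩
  left_inv p := by
    have := p.isLt
    apply Fin.ext
    simp only
    split_ifs <;> omega
  right_inv r := by
    have := r.isLt
    apply Fin.ext
    simp only
    split_ifs <;> omega

theorem rho_val (p : Fin (60 + 59)) : ((rho p : Fin (60 + 59)) : ℕ) =
    if (p : ℕ) < 44 then (p : ℕ) else if (p : ℕ) < 104 then (p : ℕ) + 15
      else (p : ℕ) - 60 := rfl

set_option maxRecDepth 8000 in
set_option maxHeartbeats 1000000 in
/-- Let `k` be algebraically closed of characteristic 2, `A ∈ k` nonzero, and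
`f = A²²a⁶⁰ + A¹⁶a⁴⁵ + A¹⁴a⁴⁰ + A⁸a²⁵ + A⁶a²⁰ + a⁵ + A² ∈ k[a]`.  Then the
discriminant of `f` with respect to `a` equals `A¹³⁵⁶ ≠ 0` — expressed below
(avoiding division, and noting that in characteristic 2 the sign in
`Res(f, f') = ± lc(f)·Disc(f)` is irrelevant) as
`Res(f, f') = lc(f) · A¹³⁵⁶` — so `f` is separable and has exactly 60 distinct
roots in `k`, all of which are nonzero. -/
theorem stmt_19 (k : Type*) [Field k] [IsAlgClosed k] [CharP k 2] [DecidableEq k]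
    (A : k) (hA : A ≠ 0) :
    let f : k[X] := C (A ^ 22) * X ^ 60 + C (A ^ 16) * X ^ 45 + C (A ^ 14) * X ^ 40
      + C (A ^ 8) * X ^ 25 + C (A ^ 6) * X ^ 20 + X ^ 5 + C (A ^ 2)
    resultant 60 59 f (derivative f) = f.leadingCoeff * A ^ 1356 ∧
    (A : k) ^ 1356 ≠ 0 ∧
    f.Separable ∧ f.roots.toFinset.card = 60 ∧ ∀ x ∈ f.roots, x ≠ 0 := by
  intro f
  have hf : f = C (A ^ 22) * X ^ 60 + C (A ^ 16) * X ^ 45 + C (A ^ 14) * X ^ 40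
      + C (A ^ 8) * X ^ 25 + C (A ^ 6) * X ^ 20 + X ^ 5 + C (A ^ 2) := rfl
  have hA2 : (A : k) ^ 2 ≠ 0 := pow_ne_zero _ hA
  have hA22 : (A : k) ^ 22 ≠ 0 := pow_ne_zero _ hA
  -- the derivative
  have hder : derivative f = C (A ^ 16) * X ^ 44 + C (A ^ 8) * X ^ 24 + X ^ 4 := by
    have h2 : (2 : k) = 0 := CharTwo.two_eq_zero
    have h60 : (60:k) = 0 := by rw [show (60:k)=2*30 by norm_num, h2]; ring
    have h45 : (45:k) = 1 := by rw [show (45:k)=2*22+1 by norm_num, h2]; ring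
    have h40 : (40:k) = 0 := by rw [show (40:k)=2*20 by norm_num, h2]; ring
    have h25 : (25:k) = 1 := by rw [show (25:k)=2*12+1 by norm_num, h2]; ring
    have h20 : (20:k) = 0 := by rw [show (20:k)=2*10 by norm_num, h2]; ring
    have h5 : (5:k) = 1 := by rw [show (5:k)=2*2+1 by norm_num, h2]; ring
    rw [hf]
    simp only [derivative_add, derivative_C_mul, derivative_X_pow, derivative_C]
    push_cast
    ring_nf
    rw [h60, h45, h40, h25, h20, h5]
    simp
  set g : k[X] := derivative f with hg
  -- the key division identity:  f = (A⁶X¹⁶ + X)·f' + A²  (char 2)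
  have hkey : f + (C (A ^ 6) * X ^ 16 + X) * g = C (A ^ 2) := by
    have h2 : (2 : k[X]) = 0 := by
      haveI : CharP k[X] 2 := inferInstance
      exact CharTwo.two_eq_zero
    rw [hf, hder]
    simp only [C_pow]
    linear_combination ((C A)^22 * X^60 + (C A)^16 * X^45 + (C A)^14 * X^40
      + (C A)^8 * X^25 + (C A)^6 * X^20 + X^5) * h2
  -- degrees and coefficients
  have hdf : f.natDegree ≤ 60 := by rw [hf]; compute_degree
  have hdg : g.natDegree ≤ 44 := by rw [hder]; compute_degree
  have hcf60 : f.coeff 60 = A ^ 22 := by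
    rw [hf]; simp only [coeff_add, coeff_C_mul, coeff_X_pow, coeff_C]; norm_num
  have hcg44 : g.coeff 44 = A ^ 16 := by
    rw [hder]; simp only [coeff_add, coeff_C_mul, coeff_X_pow, coeff_C]; norm_num
  have hndf : f.natDegree = 60 :=
    le_antisymm hdf (le_natDegree_of_ne_zero (by rw [hcf60]; exact hA22))
  have hlc : f.leadingCoeff = A ^ 22 := by rw [leadingCoeff, hndf, hcf60]
  have hf0 : f ≠ 0 := leadingCoeff_ne_zero.mp (by rw [hlc]; exact hA22)
  -- separability
  have hsep : f.Separable := by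
    refine ⟨C ((A ^ 2)⁻¹), C ((A ^ 2)⁻¹) * (C (A ^ 6) * X ^ 16 + X), ?_⟩
    have : C ((A ^ 2)⁻¹) * f + C ((A ^ 2)⁻¹) * (C (A ^ 6) * X ^ 16 + X) * g
        = C ((A ^ 2)⁻¹) * (f + (C (A ^ 6) * X ^ 16 + X) * g) := by ring
    rw [this, hkey, ← C_mul, inv_mul_cancel₀ hA2, C_1]
  -- the resultant computation
  have hdetS : resultant 60 59 f g = A ^ 1378 := by
    show (sylvester 60 59 f g).det = A ^ 1378
    set S : Matrix (Fin (60 + 59)) (Fin (60 + 59)) k := sylvester 60 59 f g with hS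
    have hSrow : ∀ i j : Fin (60 + 59), S i j =
        if (i : ℕ) < 59 then (f * X ^ (i : ℕ)).coeff j
        else (g * X ^ ((i : ℕ) - 59)).coeff j := by
      intro i j
      simp only [hS, sylvester, coeff_mul_X_pow']
    set E : Matrix (Fin (60 + 59)) (Fin (60 + 59)) k := fun i l =>
      (if l = i then 1 else 0)
      + (if (i : ℕ) < 44 ∧ (l : ℕ) = (i : ℕ) + 75 then A ^ 6 else 0)
      + (if (i : ℕ) < 44 ∧ (l : ℕ) = (i : ℕ) + 60 then 1 else 0) with hE
    have hEtri : E.BlockTriangular id := by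
      intro i j hij
      have hji : (j : ℕ) < (i : ℕ) := hij
      simp only [hE]
      rw [if_neg (by simp [Fin.ext_iff]; omega), if_neg (by omega), if_neg (by omega)]
      ring
    have hdetE : E.det = 1 := by
      rw [Matrix.det_of_upperTriangular hEtri]
      have h1 : ∀ i : Fin (60 + 59), E i i = 1 := by
        intro i
        simp only [hE]
        rw [if_neg (show ¬((i:ℕ) < 44 ∧ (i:ℕ) = (i:ℕ) + 75) by omega),
          if_neg (show ¬((i:ℕ) < 44 ∧ (i:ℕ) = (i:ℕ) + 60) by omega)]
        simp
      exact Finset.prod_eq_one fun i _ => h1 i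
    -- rows of E * S
    have hrow2 : ∀ r : Fin (60 + 59), ¬ ((r : ℕ) < 44) → ∀ j : Fin (60 + 59),
        (E * S) r j = S r j := by
      intro r hr j
      have hEr : ∀ l : Fin (60 + 59), E r l = if l = r then 1 else 0 := by
        intro l
        simp only [hE]
        rw [if_neg (show ¬((r:ℕ) < 44 ∧ (l:ℕ) = (r:ℕ) + 75) by omega),
          if_neg (show ¬((r:ℕ) < 44 ∧ (l:ℕ) = (r:ℕ) + 60) by omega)]
        ring
      rw [Matrix.mul_apply]
      simp only [hEr, ite_mul, one_mul, zero_mul]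
      rw [Finset.sum_ite_eq' Finset.univ r (fun l => S l j)]
      simp
    have hrow1 : ∀ r : Fin (60 + 59), (r : ℕ) < 44 → ∀ j : Fin (60 + 59),
        (E * S) r j = (C (A ^ 2) * X ^ (r : ℕ)).coeff j := by
      intro r hr j
      set c1 : Fin (60 + 59) := ⟨(r : ℕ) + 75, by omega⟩ with hc1
      set c2 : Fin (60 + 59) := ⟨(r : ℕ) + 60, by omega⟩ with hc2
      have hEr : ∀ l, E r l = (if l = r then 1 else 0)
          + (if l = c1 then A ^ 6 else 0) + (if l = c2 then 1 else 0) := by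
        intro l
        simp only [hE, hr, true_and, hc1, hc2, Fin.ext_iff]
      rw [Matrix.mul_apply]
      simp only [hEr, add_mul, ite_mul, one_mul, zero_mul, Finset.sum_add_distrib,
        Finset.sum_ite_eq' Finset.univ, Finset.mem_univ, if_true]
      have hc1v : (c1 : ℕ) = (r : ℕ) + 75 := rfl
      have hc2v : (c2 : ℕ) = (r : ℕ) + 60 := rfl
      rw [hSrow, hSrow, hSrow, hc1v, hc2v]
      rw [if_pos (show (r:ℕ) < 59 by omega), if_neg (show ¬((r:ℕ) + 75 < 59) by omega),
        if_neg (show ¬((r:ℕ) + 60 < 59) by omega),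
        show (r:ℕ) + 75 - 59 = (r:ℕ) + 16 by omega,
        show (r:ℕ) + 60 - 59 = (r:ℕ) + 1 by omega]
      rw [← coeff_C_mul, ← coeff_add, ← coeff_add]
      congr 1
      linear_combination (X : k[X]) ^ (r : ℕ) * hkey
    -- the reordered matrix is lower triangular
    set M : Matrix (Fin (60 + 59)) (Fin (60 + 59)) k := (E * S).submatrix rho id with hM
    have hMpol : ∀ p q : Fin (60 + 59), M p q =
        (if (p : ℕ) < 44 then C (A ^ 2) * X ^ (p : ℕ)
         else if (p : ℕ) < 104 then g * X ^ ((p : ℕ) - 44)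
         else f * X ^ ((p : ℕ) - 60)).coeff q := by
      intro p q
      have hq := p.isLt
      by_cases h1 : (p : ℕ) < 44
      · have hv : ((rho p : Fin (60 + 59)) : ℕ) = (p : ℕ) := by rw [rho_val, if_pos h1]
        rw [hM, Matrix.submatrix_apply, id_eq, hrow1 (rho p) (by omega) q, hv, if_pos h1]
      · by_cases h2 : (p : ℕ) < 104
        · have hv : ((rho p : Fin (60 + 59)) : ℕ) = (p : ℕ) + 15 := by
            rw [rho_val, if_neg h1, if_pos h2]
          rw [hM, Matrix.submatrix_apply, id_eq, hrow2 (rho p) (by omega) q,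
            hSrow, hv, if_neg (show ¬((p:ℕ) + 15 < 59) by omega), if_neg h1, if_pos h2,
            show (p:ℕ) + 15 - 59 = (p:ℕ) - 44 by omega]
        · have hv : ((rho p : Fin (60 + 59)) : ℕ) = (p : ℕ) - 60 := by
            rw [rho_val, if_neg h1, if_neg h2]
          rw [hM, Matrix.submatrix_apply, id_eq, hrow2 (rho p) (by omega) q,
            hSrow, hv, if_pos (show (p:ℕ) - 60 < 59 by omega), if_neg h1, if_neg h2]
    have hMtri : M.BlockTriangular OrderDual.toDual := by
      intro p q hpq
      have hlt : (p : ℕ) < (q : ℕ) := hpq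
      rw [hMpol]
      apply coeff_eq_zero_of_natDegree_lt
      have hq := p.isLt
      refine lt_of_le_of_lt ?_ hlt
      split_ifs with h1 h2
      · exact natDegree_mul_le.trans (by simp)
      · exact natDegree_mul_le.trans
          (by rw [natDegree_X_pow]; omega)
      · exact natDegree_mul_le.trans
          (by rw [natDegree_X_pow]; omega)
    have hMdiag : ∀ p : Fin (60 + 59), M p p =
        if (p : ℕ) < 44 then A ^ 2 else if (p : ℕ) < 104 then A ^ 16 else A ^ 22 := by
      intro p
      rw [hMpol]
      split_ifs with h1 h2
      · rw [coeff_C_mul, coeff_X_pow, if_pos rfl, mul_one]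
      · rw [coeff_mul_X_pow', if_pos (by omega), show (p : ℕ) - ((p : ℕ) - 44) = 44 by omega,
          hcg44]
      · rw [coeff_mul_X_pow', if_pos (by omega), show (p : ℕ) - ((p : ℕ) - 60) = 60 by omega,
          hcf60]
    have hMdet : M.det = A ^ 1378 := by
      rw [Matrix.det_of_lowerTriangular M hMtri]
      have : ∏ p : Fin (60 + 59), M p p = ∏ i ∈ Finset.range (60 + 59),
          (if i < 44 then A ^ 2 else if i < 104 then A ^ 16 else A ^ 22) := by
        rw [Finset.prod_range fun i => (if i < 44 then A ^ 2 else if i < 104 then A ^ 16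
          else A ^ 22)]
        exact Finset.prod_congr rfl fun p _ => hMdiag p
      rw [this, show (60 + 59 : ℕ) = 44 + 75 by norm_num, Finset.prod_range_add]
      rw [show (75 : ℕ) = 60 + 15 from rfl, Finset.prod_range_add]
      rw [Finset.prod_congr rfl fun i hi => if_pos (Finset.mem_range.mp hi),
        Finset.prod_const, Finset.card_range]
      rw [Finset.prod_congr rfl (fun i hi => by
        have := Finset.mem_range.mp hi
        rw [if_neg (by omega), if_pos (by omega)]), Finset.prod_const, Finset.card_range]
      rw [Finset.prod_congr rfl (fun i hi => by
        have := Finset.mem_range.mp hi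
        rw [if_neg (by omega), if_neg (by omega)]), Finset.prod_const, Finset.card_range]
      ring
    -- assemble
    have hperm := Matrix.det_permute rho (E * S)
    rw [← hM] at hperm
    rw [hMdet, Matrix.det_mul, hdetE, one_mul] at hperm
    have hsign : ((Equiv.Perm.sign rho : ℤˣ) : k) = 1 ∨
        ((Equiv.Perm.sign rho : ℤˣ) : k) = -1 := by
      rcases Int.units_eq_one_or (Equiv.Perm.sign rho) with h | h <;> rw [h] <;> simp
    rcases hsign with h | h
    · rw [h, one_mul] at hperm; exact hperm.symm
    · rw [h, neg_one_mul, CharTwo.neg_eq] at hperm; exact hperm.symm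
  -- roots
  have hsplits : f.Splits := IsAlgClosed.splits f
  have hcard : Multiset.card f.roots = 60 := by
    rw [← hndf]
    exact (splits_iff_card_roots).mp hsplits
  have hnodup : f.roots.Nodup := nodup_roots hsep
  refine ⟨?_, pow_ne_zero _ hA, hsep, ?_, ?_⟩
  · rw [hdetS, hlc, ← pow_add]
  · rw [Multiset.toFinset_card_of_nodup hnodup, hcard]
  · intro x hx
    rintro rfl
    have h0 : f.eval 0 = 0 := isRoot_of_mem_roots hx
    rw [hf] at h0
    simp at h0
    exact hA h0

end Stmt19
end
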